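/- For r > 0 and σ ∈ {1, −1} define v_{r,σ} : ℝ → ℝ by v_{r,σ}(x) = ∫_0^x sinh(r)/(cosh(r) − σ·cos y) dy. Let n ≥ 1, let K, L ≥ 0 be natural numbers, let α > 0, β ∈ [0,1), r_1,…,r_K > 0, s_1,…,s_L > 0 and σ_1,…,σ_K, τ_1,…,τ_L ∈ {1,−1}, and let μ = (μ_1,…,μ_n) ∈ ℤ^n with μ_1 > μ_2 > … > μ_n. Then there exists a unique ξ = (ξ_1,…,ξ_n) ∈ ℝ^n satisfying, for every j ∈ {1,…,n}, the system α ξ_j + Σ_{k=1}^K v_{r_k,σ_k}(ξ_j) + Σ_{j′≠j} Σ_{l=1}^L v_{s_l,τ_l}(ξ_j − ξ_{j′}) = 2π(μ_j + β). -/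

import Mathlib

open Real Finset

noncomputable def vTrig (r σ x : ℝ) : ℝ :=
  ∫ y in (0:ℝ)..x, Real.sinh r / (Real.cosh r - σ * Real.cos y)

section basic

variable {r σ : ℝ} (hr : 0 < r) (hσ : σ = 1 ∨ σ = -1)
include hr hσ

lemma trigDen_pos (y : ℝ) : 0 < Real.cosh r - σ * Real.cos y := by
  have h1 : σ * Real.cos y ≤ 1 := by
    rcases hσ with h | h <;> rw [h] <;>
      nlinarith [Real.neg_one_le_cos y, Real.cos_le_one y]
  have h2 : 1 < Real.cosh r := Real.one_lt_cosh.2 (ne_of_gt hr)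
  linarith

lemma trigF_pos (y : ℝ) : 0 < Real.sinh r / (Real.cosh r - σ * Real.cos y) :=
  div_pos (Real.sinh_pos_iff.2 hr) (trigDen_pos hr hσ y)

lemma trigF_cont : Continuous (fun y => Real.sinh r / (Real.cosh r - σ * Real.cos y)) := by
  apply continuous_const.div (by continuity)
  exact fun y => ne_of_gt (trigDen_pos hr hσ y)

lemma vTrig_hasDerivAt (x : ℝ) :
    HasDerivAt (vTrig r σ) (Real.sinh r / (Real.cosh r - σ * Real.cos x)) x := by
  exact intervalIntegral.integral_hasDerivAt_right
    ((trigF_cont hr hσ).intervalIntegrable _ _)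
    ((trigF_cont hr hσ).aestronglyMeasurable.stronglyMeasurableAtFilter)
    (trigF_cont hr hσ).continuousAt

lemma vTrig_continuous : Continuous (vTrig r σ) := by
  have : Differentiable ℝ (vTrig r σ) := fun x => (vTrig_hasDerivAt hr hσ x).differentiableAt
  exact this.continuous

lemma vTrig_strictMono : StrictMono (vTrig r σ) := by
  apply strictMono_of_deriv_pos
  intro x
  rw [(vTrig_hasDerivAt hr hσ x).deriv]
  exact trigF_pos hr hσ x

omit hr hσ in
lemma vTrig_neg (x : ℝ) : vTrig r σ (-x) = -vTrig r σ x := by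
  have h1 : vTrig r σ (-x) = ∫ y in (-(0:ℝ))..(-x),
      Real.sinh r / (Real.cosh r - σ * Real.cos y) := by norm_num [vTrig]
  rw [h1, ← intervalIntegral.integral_comp_neg
      (fun y => Real.sinh r / (Real.cosh r - σ * Real.cos y))]
  simp only [Real.cos_neg]
  rw [intervalIntegral.integral_symm]
  rfl

omit hr hσ in
lemma vTrig_zero : vTrig r σ 0 = 0 := by simp [vTrig]

lemma vTrig_nonneg {x : ℝ} (hx : 0 ≤ x) : 0 ≤ vTrig r σ x := by
  rw [← vTrig_zero (r := r) (σ := σ)]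
  exact (vTrig_strictMono hr hσ).monotone hx

lemma vTrig_nonpos {x : ℝ} (hx : x ≤ 0) : vTrig r σ x ≤ 0 := by
  rw [← vTrig_zero (r := r) (σ := σ)]
  exact (vTrig_strictMono hr hσ).monotone hx

end basic

/-- The antiderivative of `vTrig`. -/
noncomputable def VV (r σ x : ℝ) : ℝ := ∫ t in (0:ℝ)..x, vTrig r σ t

section VV

variable {r σ : ℝ} (hr : 0 < r) (hσ : σ = 1 ∨ σ = -1)
include hr hσ

lemma VV_hasDerivAt (x : ℝ) : HasDerivAt (VV r σ) (vTrig r σ x) x := by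
  exact intervalIntegral.integral_hasDerivAt_right
    ((vTrig_continuous hr hσ).intervalIntegrable _ _)
    ((vTrig_continuous hr hσ).aestronglyMeasurable.stronglyMeasurableAtFilter)
    (vTrig_continuous hr hσ).continuousAt

lemma VV_continuous : Continuous (VV r σ) := by
  have : Differentiable ℝ (VV r σ) := fun x => (VV_hasDerivAt hr hσ x).differentiableAt
  exact this.continuous

lemma VV_nonneg (x : ℝ) : 0 ≤ VV r σ x := by
  rcases le_total 0 x with hx | hx
  · exact intervalIntegral.integral_nonneg hx
      (fun t ht => vTrig_nonneg hr hσ ht.1)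
  · have h1 : VV r σ x = -∫ t in x..(0:ℝ), vTrig r σ t := by
      unfold VV; rw [intervalIntegral.integral_symm]
    have h2 : 0 ≤ ∫ t in x..(0:ℝ), -vTrig r σ t :=
      intervalIntegral.integral_nonneg hx (fun t ht => neg_nonneg.2 (vTrig_nonpos hr hσ ht.2))
    rw [intervalIntegral.integral_neg] at h2
    rw [h1]
    linarith

end VV

/-- For a monotone function, `(f a - f b) * (a - b) ≥ 0`. -/
lemma monotone_mul_sub_nonneg {f : ℝ → ℝ} (hf : Monotone f) (a b : ℝ) :
    0 ≤ (f a - f b) * (a - b) := by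
  rcases le_total a b with h | h
  · nlinarith [hf h]
  · nlinarith [hf h]



/-- symmetrization of a double sum -/
lemma sum_sym_double {n : ℕ} (f : Fin n → Fin n → ℝ) :
    ∑ j, ∑ j', (f j j' + f j' j) = 2 * ∑ j, ∑ j', f j j' := by
  simp only [Finset.sum_add_distrib]
  have h : ∑ j : Fin n, ∑ j' : Fin n, f j' j = ∑ j' : Fin n, ∑ j : Fin n, f j' j :=
    Finset.sum_comm
  rw [h]; ring



/-- For a monotone function, `(f a - f b) * (a - b) ≥ 0`. -/
lemma monotone_mul_sub_nonneg' {f : ℝ → ℝ} (hf : Monotone f) (a b : ℝ) :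
    0 ≤ (f a - f b) * (a - b) := by
  rcases le_total a b with h | h
  · nlinarith [hf h]
  · nlinarith [hf h]

lemma interaction_nonneg {n L : ℕ} (w : Fin L → ℝ → ℝ)
    (hmono : ∀ l, Monotone (w l)) (hodd : ∀ l x, w l (-x) = - w l x)
    (ξ η : Fin n → ℝ) :
    0 ≤ ∑ j, ∑ j' ∈ Finset.univ.erase j,
        ∑ l, (w l (ξ j - ξ j') - w l (η j - η j')) * (ξ j - η j) := by
  classical
  have hdiag : ∀ j : Fin n,
      (∑ l, (w l (ξ j - ξ j) - w l (η j - η j)) * (ξ j - η j)) = 0 := by simp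
  have h1 : (∑ j, ∑ j' ∈ Finset.univ.erase j,
        ∑ l, (w l (ξ j - ξ j') - w l (η j - η j')) * (ξ j - η j))
      = ∑ j, ∑ j', ∑ l, (w l (ξ j - ξ j') - w l (η j - η j')) * (ξ j - η j) :=
    Finset.sum_congr rfl fun j _ => Finset.sum_erase _ (hdiag j)
  rw [h1]
  have h2 : ∀ j j' : Fin n,
      0 ≤ (∑ l, (w l (ξ j - ξ j') - w l (η j - η j')) * (ξ j - η j))
        + (∑ l, (w l (ξ j' - ξ j) - w l (η j' - η j)) * (ξ j' - η j')) := by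
    intro j j'
    rw [← Finset.sum_add_distrib]
    apply Finset.sum_nonneg; intro l _
    have hm := monotone_mul_sub_nonneg' (hmono l) (ξ j - ξ j') (η j - η j')
    have o1 : w l (ξ j' - ξ j) = - w l (ξ j - ξ j') := by
      rw [← hodd l]; congr 1; ring
    have o2 : w l (η j' - η j) = - w l (η j - η j') := by
      rw [← hodd l]; congr 1; ring
    rw [o1, o2]; nlinarith [hm]
  have h3 := sum_sym_double
    (fun j j' => ∑ l, (w l (ξ j - ξ j') - w l (η j - η j')) * (ξ j - η j))
  have h4 : 0 ≤ ∑ j : Fin n, ∑ j' : Fin n,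
      ((∑ l, (w l (ξ j - ξ j') - w l (η j - η j')) * (ξ j - η j))
        + (∑ l, (w l (ξ j' - ξ j) - w l (η j' - η j)) * (ξ j' - η j'))) :=
    Finset.sum_nonneg fun j _ => Finset.sum_nonneg fun j' _ => h2 j j'
  rw [h3] at h4
  linarith

/-- The potential whose critical points are the solutions of the system. -/
noncomputable def PhiFun (n K L : ℕ) (α : ℝ) (c : Fin n → ℝ)
    (r σ : Fin K → ℝ) (s τ : Fin L → ℝ) (ξ : Fin n → ℝ) : ℝ :=
  (∑ j, (α / 2 * ξ j ^ 2 - c j * ξ j + ∑ k, VV (r k) (σ k) (ξ j)))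
    + (1 / 2) * ∑ j, ∑ j' ∈ Finset.univ.erase j, ∑ l, VV (s l) (τ l) (ξ j - ξ j')

section Phi

variable {n K L : ℕ} {α : ℝ} {c : Fin n → ℝ} {r σ : Fin K → ℝ} {s τ : Fin L → ℝ}
variable (hα : 0 < α) (hr : ∀ k, 0 < r k) (hs : ∀ l, 0 < s l)
variable (hσ : ∀ k, σ k = 1 ∨ σ k = -1) (hτ : ∀ l, τ l = 1 ∨ τ l = -1)
include hα hr hs hσ hτ

omit hα hr hs hσ hτ in
lemma PhiFun_continuous (hr : ∀ k, 0 < r k) (hs : ∀ l, 0 < s l)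
    (hσ : ∀ k, σ k = 1 ∨ σ k = -1) (hτ : ∀ l, τ l = 1 ∨ τ l = -1) :
    Continuous (PhiFun n K L α c r σ s τ) := by
  unfold PhiFun
  apply Continuous.add
  · apply continuous_finset_sum
    intro j _
    apply Continuous.add
    · exact (continuous_const.mul ((continuous_apply j).pow 2)).sub
        (continuous_const.mul (continuous_apply j))
    · exact continuous_finset_sum _ fun k _ =>
        (VV_continuous (hr k) (hσ k)).comp (continuous_apply j)
  · apply Continuous.mul continuous_const
    apply continuous_finset_sum
    intro j _
    apply continuous_finset_sum
    intro j' _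
    exact continuous_finset_sum _ fun l _ =>
      (VV_continuous (hs l) (hτ l)).comp ((continuous_apply j).sub (continuous_apply j'))

lemma PhiFun_lowerBound (ξ : Fin n → ℝ) (j0 : Fin n) :
    α / 4 * ξ j0 ^ 2 - (∑ j, (c j) ^ 2 / α) ≤ PhiFun n K L α c r σ s τ ξ := by
  have hterm : ∀ j : Fin n, α / 4 * ξ j ^ 2 - (c j) ^ 2 / α
      ≤ α / 2 * ξ j ^ 2 - c j * ξ j + ∑ k, VV (r k) (σ k) (ξ j) := by
    intro j
    have h1 : 0 ≤ ∑ k, VV (r k) (σ k) (ξ j) :=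
      Finset.sum_nonneg fun k _ => VV_nonneg (hr k) (hσ k) _
    have h2 : (c j) ^ 2 / α * α = (c j) ^ 2 := div_mul_cancel₀ _ (ne_of_gt hα)
    nlinarith [sq_nonneg (α * ξ j - 2 * c j), hα, h1, h2]
  have h2 : 0 ≤ (1 / 2 : ℝ) * ∑ j, ∑ j' ∈ Finset.univ.erase j,
      ∑ l, VV (s l) (τ l) (ξ j - ξ j') := by
    apply mul_nonneg (by norm_num)
    exact Finset.sum_nonneg fun j _ => Finset.sum_nonneg fun j' _ =>
      Finset.sum_nonneg fun l _ => VV_nonneg (hs l) (hτ l) _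
  have h3 : ∑ j, (α / 4 * ξ j ^ 2 - (c j) ^ 2 / α)
      ≤ ∑ j, (α / 2 * ξ j ^ 2 - c j * ξ j + ∑ k, VV (r k) (σ k) (ξ j)) :=
    Finset.sum_le_sum fun j _ => hterm j
  have h4 : α / 4 * ξ j0 ^ 2 - (∑ j, (c j) ^ 2 / α)
      ≤ ∑ j, (α / 4 * ξ j ^ 2 - (c j) ^ 2 / α) := by
    rw [Finset.sum_sub_distrib]
    have : α / 4 * ξ j0 ^ 2 ≤ ∑ j, α / 4 * ξ j ^ 2 :=
      Finset.single_le_sum (f := fun j => α / 4 * ξ j ^ 2) (fun j _ => by positivity) (Finset.mem_univ j0)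
    linarith
  unfold PhiFun
  linarith

lemma PhiFun_hasDerivAt (ξ : Fin n → ℝ) (j : Fin n) :
    HasDerivAt (fun t => PhiFun n K L α c r σ s τ (Function.update ξ j t))
      (α * ξ j - c j + (∑ k, vTrig (r k) (σ k) (ξ j))
        + ∑ j' ∈ Finset.univ.erase j, ∑ l, vTrig (s l) (τ l) (ξ j - ξ j')) (ξ j) := by
  classical
  have h1 : HasDerivAt (fun t => ∑ j'', (α / 2 * (Function.update ξ j t j'') ^ 2
      - c j'' * Function.update ξ j t j''
      + ∑ k, VV (r k) (σ k) (Function.update ξ j t j'')))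
      (∑ j'' : Fin n, if j'' = j
        then α * ξ j - c j + ∑ k, vTrig (r k) (σ k) (ξ j) else 0) (ξ j) := by
    apply HasDerivAt.fun_sum
    intro j'' _
    rcases eq_or_ne j'' j with h | h
    · subst h
      simp only [Function.update_self, if_pos rfl]
      have hp : HasDerivAt (fun t : ℝ => α / 2 * t ^ 2 - c j'' * t
          + ∑ k, VV (r k) (σ k) t)
          (α / 2 * (↑2 * ξ j'' ^ 1) - c j'' * 1 + ∑ k, vTrig (r k) (σ k) (ξ j'')) (ξ j'') :=
        (((hasDerivAt_pow 2 (ξ j'')).const_mul (α / 2)).sub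
          ((hasDerivAt_id (ξ j'')).const_mul (c j''))).add
          (HasDerivAt.fun_sum fun k _ => VV_hasDerivAt (hr k) (hσ k) (ξ j''))
      convert hp using 1
      · rfl
      · rfl
      push_cast
      ring
    · simp only [Function.update_of_ne h, if_neg h]
      exact hasDerivAt_const _ _
  simp only [Finset.sum_ite_eq', Finset.mem_univ, if_true] at h1
  have h2 : HasDerivAt (fun t => ∑ j'', ∑ j' ∈ Finset.univ.erase j'',
      ∑ l, VV (s l) (τ l) (Function.update ξ j t j'' - Function.update ξ j t j'))
      (∑ j'' : Fin n, ∑ j' ∈ Finset.univ.erase j'', ∑ l,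
        (if j'' = j then vTrig (s l) (τ l) (ξ j - ξ j')
          else if j' = j then vTrig (s l) (τ l) (ξ j - ξ j'') else 0)) (ξ j) := by
    apply HasDerivAt.fun_sum
    intro j'' _
    apply HasDerivAt.fun_sum
    intro j' hj'
    apply HasDerivAt.fun_sum
    intro l _
    rcases eq_or_ne j'' j with h | h
    · subst h
      have hne : j' ≠ j'' := Finset.ne_of_mem_erase hj'
      simp only [Function.update_self, Function.update_of_ne hne, if_pos rfl]
      exact (VV_hasDerivAt (hs l) (hτ l) (ξ j'' - ξ j')).comp_sub_const (ξ j'') (ξ j')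
    · rcases eq_or_ne j' j with h' | h'
      · subst h'
        simp only [Function.update_self, Function.update_of_ne h, if_neg h, if_pos rfl]
        have hd := (VV_hasDerivAt (hs l) (hτ l) (ξ j'' - ξ j')).comp_const_sub (ξ j'') (ξ j')
        have hval : vTrig (s l) (τ l) (ξ j' - ξ j'') = -vTrig (s l) (τ l) (ξ j'' - ξ j') := by
          rw [← vTrig_neg, neg_sub]
        rw [hval]
        exact hd
      · simp only [Function.update_of_ne h, Function.update_of_ne h', if_neg h, if_neg h']
        exact hasDerivAt_const _ _
  have hval : (∑ j'' : Fin n, ∑ j' ∈ Finset.univ.erase j'', ∑ l,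
      (if j'' = j then vTrig (s l) (τ l) (ξ j - ξ j')
        else if j' = j then vTrig (s l) (τ l) (ξ j - ξ j'') else 0))
      = 2 * ∑ j' ∈ Finset.univ.erase j, ∑ l, vTrig (s l) (τ l) (ξ j - ξ j') := by
    rw [← Finset.sum_erase_add _ _ (Finset.mem_univ j)]
    have hpart1 : (∑ j'' ∈ Finset.univ.erase j, ∑ j' ∈ Finset.univ.erase j'', ∑ l,
        (if j'' = j then vTrig (s l) (τ l) (ξ j - ξ j')
          else if j' = j then vTrig (s l) (τ l) (ξ j - ξ j'') else 0))
        = ∑ j'' ∈ Finset.univ.erase j, ∑ l, vTrig (s l) (τ l) (ξ j - ξ j'') := by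
      apply Finset.sum_congr rfl
      intro j'' hj''
      have h : j'' ≠ j := Finset.ne_of_mem_erase hj''
      simp only [if_neg h]
      have hinner : ∀ j' : Fin n,
          (∑ l, if j' = j then vTrig (s l) (τ l) (ξ j - ξ j'') else 0)
          = if j' = j then (∑ l, vTrig (s l) (τ l) (ξ j - ξ j'')) else 0 := by
        intro j'; split_ifs <;> simp
      rw [Finset.sum_congr rfl fun j' _ => hinner j']
      rw [Finset.sum_ite_eq' (Finset.univ.erase j'') j]
      simp [Finset.mem_erase, Ne.symm h]
    have hpart2 : (∑ j' ∈ Finset.univ.erase j, ∑ l,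
        (if j = j then vTrig (s l) (τ l) (ξ j - ξ j')
          else if j' = j then vTrig (s l) (τ l) (ξ j - ξ j) else 0))
        = ∑ j' ∈ Finset.univ.erase j, ∑ l, vTrig (s l) (τ l) (ξ j - ξ j') := by
      simp
    rw [hpart1, hpart2]
    ring
  have hfinal := h1.add (h2.const_mul (1 / 2))
  rw [hval] at hfinal
  have heq : α * ξ j - c j + (∑ k, vTrig (r k) (σ k) (ξ j))
      + (∑ j' ∈ Finset.univ.erase j, ∑ l, vTrig (s l) (τ l) (ξ j - ξ j'))
      = α * ξ j - c j + (∑ k, vTrig (r k) (σ k) (ξ j))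
      + 1 / 2 * (2 * ∑ j' ∈ Finset.univ.erase j, ∑ l, vTrig (s l) (τ l) (ξ j - ξ j')) := by
    ring
  rw [heq]
  exact hfinal

end Phi

theorem trigA_exists_unique
    (n K L : ℕ) (hn : 1 ≤ n)
    (α β : ℝ) (hα : 0 < α) (hβ0 : 0 ≤ β) (hβ1 : β < 1)
    (r : Fin K → ℝ) (σ : Fin K → ℝ) (s : Fin L → ℝ) (τ : Fin L → ℝ)
    (hr : ∀ k, 0 < r k) (hs : ∀ l, 0 < s l)
    (hσ : ∀ k, σ k = 1 ∨ σ k = -1) (hτ : ∀ l, τ l = 1 ∨ τ l = -1)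
    (μ : Fin n → ℤ) (hμ : ∀ j j' : Fin n, j < j' → μ j' < μ j) :
    ∃! ξ : Fin n → ℝ, ∀ j : Fin n,
      α * ξ j + (∑ k, vTrig (r k) (σ k) (ξ j)) +
      (∑ j' ∈ Finset.univ.erase j, ∑ l, vTrig (s l) (τ l) (ξ j - ξ j'))
      = 2 * π * ((μ j : ℝ) + β) := by
  classical
  have hwmono : ∀ l, Monotone (vTrig (s l) (τ l)) :=
    fun l => (vTrig_strictMono (hs l) (hτ l)).monotone
  have hvmono : ∀ k, Monotone (vTrig (r k) (σ k)) :=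
    fun k => (vTrig_strictMono (hr k) (hσ k)).monotone
  -- the constants on the right-hand side
  set c : Fin n → ℝ := fun j => 2 * π * ((μ j : ℝ) + β) with hc
  -- uniqueness
  have main_uniq : ∀ ξ η : Fin n → ℝ,
      (∀ j : Fin n, α * ξ j + (∑ k, vTrig (r k) (σ k) (ξ j)) +
        (∑ j' ∈ Finset.univ.erase j, ∑ l, vTrig (s l) (τ l) (ξ j - ξ j'))
        = 2 * π * ((μ j : ℝ) + β)) →
      (∀ j : Fin n, α * η j + (∑ k, vTrig (r k) (σ k) (η j)) +
        (∑ j' ∈ Finset.univ.erase j, ∑ l, vTrig (s l) (τ l) (η j - η j'))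
        = 2 * π * ((μ j : ℝ) + β)) → ξ = η := by
    intro ξ η hξ hη
    have hdiff : ∀ j : Fin n, α * (ξ j - η j)
        + (∑ k, (vTrig (r k) (σ k) (ξ j) - vTrig (r k) (σ k) (η j)))
        + (∑ j' ∈ Finset.univ.erase j, ∑ l,
            (vTrig (s l) (τ l) (ξ j - ξ j') - vTrig (s l) (τ l) (η j - η j'))) = 0 := by
      intro j
      have h1 := hξ j
      have h2 := hη j
      simp only [Finset.sum_sub_distrib]
      linarith
    have hper : ∀ j : Fin n, α * (ξ j - η j) * (ξ j - η j)
        + ((∑ k, (vTrig (r k) (σ k) (ξ j) - vTrig (r k) (σ k) (η j)) * (ξ j - η j))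
          + (∑ j' ∈ Finset.univ.erase j, ∑ l,
            (vTrig (s l) (τ l) (ξ j - ξ j') - vTrig (s l) (τ l) (η j - η j')) * (ξ j - η j)))
        = 0 := by
      intro j
      have e1 : α * (ξ j - η j) * (ξ j - η j)
          + ((∑ k, (vTrig (r k) (σ k) (ξ j) - vTrig (r k) (σ k) (η j)) * (ξ j - η j))
            + (∑ j' ∈ Finset.univ.erase j, ∑ l,
              (vTrig (s l) (τ l) (ξ j - ξ j') - vTrig (s l) (τ l) (η j - η j')) * (ξ j - η j)))
          = (α * (ξ j - η j)
            + (∑ k, (vTrig (r k) (σ k) (ξ j) - vTrig (r k) (σ k) (η j)))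
            + (∑ j' ∈ Finset.univ.erase j, ∑ l,
              (vTrig (s l) (τ l) (ξ j - ξ j') - vTrig (s l) (τ l) (η j - η j'))))
            * (ξ j - η j) := by
        simp only [add_mul, Finset.sum_mul]
        ring
      rw [e1, hdiff j, zero_mul]
    have key0 : (∑ j, α * (ξ j - η j) * (ξ j - η j))
        + ((∑ j, ∑ k, (vTrig (r k) (σ k) (ξ j) - vTrig (r k) (σ k) (η j)) * (ξ j - η j))
          + (∑ j, ∑ j' ∈ Finset.univ.erase j, ∑ l,
            (vTrig (s l) (τ l) (ξ j - ξ j') - vTrig (s l) (τ l) (η j - η j')) * (ξ j - η j)))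
        = 0 := by
      rw [← Finset.sum_add_distrib, ← Finset.sum_add_distrib,
        Finset.sum_congr rfl fun j _ => hper j, Finset.sum_const_zero]
    have hA : 0 ≤ ∑ j, ∑ k,
        (vTrig (r k) (σ k) (ξ j) - vTrig (r k) (σ k) (η j)) * (ξ j - η j) :=
      Finset.sum_nonneg fun j _ => Finset.sum_nonneg fun k _ =>
        monotone_mul_sub_nonneg' (hvmono k) _ _
    have hB : 0 ≤ ∑ j, ∑ j' ∈ Finset.univ.erase j, ∑ l,
        (vTrig (s l) (τ l) (ξ j - ξ j') - vTrig (s l) (τ l) (η j - η j')) * (ξ j - η j) :=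
      interaction_nonneg (fun l => vTrig (s l) (τ l)) hwmono
        (fun l x => vTrig_neg x) ξ η
    have hQ : 0 ≤ ∑ j, α * (ξ j - η j) * (ξ j - η j) :=
      Finset.sum_nonneg fun j _ => by nlinarith [mul_self_nonneg (ξ j - η j), hα.le]
    have hz1 : ∑ j, α * (ξ j - η j) * (ξ j - η j) = 0 := le_antisymm (by linarith) hQ
    have hzero := (Finset.sum_eq_zero_iff_of_nonneg
      (fun j _ => by nlinarith [mul_self_nonneg (ξ j - η j), hα.le] :
        ∀ j ∈ Finset.univ, 0 ≤ α * (ξ j - η j) * (ξ j - η j))).1 hz1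
    funext j
    have hj := hzero j (Finset.mem_univ j)
    have : (ξ j - η j) * (ξ j - η j) = 0 := by
      rcases mul_eq_zero.1 hj with h | h
      · rcases mul_eq_zero.1 h with h' | h'
        · exact absurd h' (ne_of_gt hα)
        · rw [h']; ring
      · rw [h]; ring
    have := mul_self_eq_zero.1 this
    linarith
  -- existence : minimize the potential `PhiFun`
  have contΦ := PhiFun_continuous (α := α) (c := c) hr hs hσ hτ
  set Φ := PhiFun n K L α c r σ s τ with hΦ
  set M : ℝ := ∑ j, (c j) ^ 2 / α with hM
  set E : ℝ := 4 * (max (Φ 0 + M) 0) / α + 1 with hE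
  set R : ℝ := Real.sqrt E with hR
  have hE1 : 1 ≤ E := by
    have : 0 ≤ 4 * (max (Φ 0 + M) 0) / α := by positivity
    simp only [hE]; linarith
  have hR0 : 0 ≤ R := Real.sqrt_nonneg _
  set S : Set (Fin n → ℝ) := Set.pi Set.univ (fun _ => Set.Icc (-R) R) with hS
  have hScomp : IsCompact S := isCompact_univ_pi fun _ => isCompact_Icc
  have h0S : (0 : Fin n → ℝ) ∈ S := by
    intro i _
    exact ⟨neg_nonpos.2 hR0, hR0⟩
  obtain ⟨ξ₀, hξ₀S, hmin⟩ := hScomp.exists_isMinOn ⟨0, h0S⟩ contΦ.continuousOn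
  have hle : Φ ξ₀ ≤ Φ 0 := hmin h0S
  have hbound : ∀ j, |ξ₀ j| < R := by
    intro j
    have h1 := PhiFun_lowerBound hα hr hs hσ hτ (c := c) ξ₀ j
    have h2 : ξ₀ j ^ 2 < E := by
      have h3 : α / 4 * ξ₀ j ^ 2 ≤ Φ 0 + M := by
        rw [hΦ] at hle ⊢
        rw [← hM] at h1
        linarith
      have h4 : Φ 0 + M ≤ max (Φ 0 + M) 0 := le_max_left _ _
      have h5 : ξ₀ j ^ 2 ≤ 4 * (max (Φ 0 + M) 0) / α := by
        rw [le_div_iff₀ hα]; nlinarith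
      simp only [hE]; linarith
    calc |ξ₀ j| = Real.sqrt (ξ₀ j ^ 2) := (Real.sqrt_sq_eq_abs _).symm
      _ < Real.sqrt E := Real.sqrt_lt_sqrt (sq_nonneg _) h2
  have hSnhds : S ∈ nhds ξ₀ := by
    rw [mem_nhds_iff]
    refine ⟨Set.pi Set.univ (fun _ => Set.Ioo (-R) R),
      fun x hx i _ => Set.Ioo_subset_Icc_self (hx i (Set.mem_univ i)),
      isOpen_set_pi Set.finite_univ (fun i _ => isOpen_Ioo), fun i _ => ?_⟩
    exact ⟨(abs_lt.1 (hbound i)).1, (abs_lt.1 (hbound i)).2⟩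
  have hloc : IsLocalMin Φ ξ₀ := hmin.isLocalMin hSnhds
  have hcrit : ∀ j : Fin n, α * ξ₀ j + (∑ k, vTrig (r k) (σ k) (ξ₀ j)) +
      (∑ j' ∈ Finset.univ.erase j, ∑ l, vTrig (s l) (τ l) (ξ₀ j - ξ₀ j'))
      = 2 * π * ((μ j : ℝ) + β) := by
    intro j
    have hupd : Function.update ξ₀ j (ξ₀ j) = ξ₀ := Function.update_eq_self j ξ₀
    have hloc1 : IsLocalMin (fun t => Φ (Function.update ξ₀ j t)) (ξ₀ j) := by
      have hg : Continuous (fun t : ℝ => Function.update ξ₀ j t) :=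
        continuous_const.update j continuous_id
      have h0 : IsLocalMin Φ ((fun t : ℝ => Function.update ξ₀ j t) (ξ₀ j)) := by
        show IsLocalMin Φ (Function.update ξ₀ j (ξ₀ j))
        rw [hupd]; exact hloc
      exact h0.comp_continuous hg.continuousAt
    have hD := hloc1.hasDerivAt_eq_zero
      (PhiFun_hasDerivAt (hα := hα) hr hs hσ hτ (c := c) ξ₀ j)
    have hcj : c j = 2 * π * ((μ j : ℝ) + β) := rfl
    rw [← hcj]
    linarith
  exact ⟨ξ₀, hcrit, fun η hη => main_uniq η ξ₀ hη hcrit⟩
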